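/- arXiv:2007.12518 — 5 statements merged into one kernel-verified Lean document; each statement's English description precedes it below -/
import Mathlib

section
/- For every pair of independent finite binary sequences s and t, the element y_s y_t⁻¹ lies in the group S. -/
/-- The Cantor set of infinite binary sequences. -/
abbrev Cantor : Type := ℕ → Bool

/-- Concatenation of a finite binary sequence with an infinite binary sequence. -/
def cat (s : List Bool) (η : Cantor) : Cantor :=
  fun n => if h : n < s.length then s.get ⟨n, h⟩ else η (n - s.length)

/-- `s` is a (finite) prefix of the infinite sequence `ξ`. -/
def IsPrefixOf (s : List Bool) (ξ : Cantor) : Prop := ∃ η : Cantor, ξ = cat s η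

/-- The group of self-homeomorphisms of a topological space, with
`(f * g) ξ = f (g ξ)` (i.e. in the right-action convention `ξ·(g h) = (ξ·g)·h`,
the product `g * f` corresponds to the word "apply `f`, then `g`"). -/
instance {α : Type*} [TopologicalSpace α] : Group (α ≃ₜ α) where
  mul f g := g.trans f
  one := Homeomorph.refl α
  inv := Homeomorph.symm
  mul_assoc _ _ _ := Homeomorph.ext fun _ => rfl
  one_mul _ := Homeomorph.ext fun _ => rfl
  mul_one _ := Homeomorph.ext fun _ => rfl
  inv_mul_cancel f := Homeomorph.ext fun ξ => f.symm_apply_apply ξ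

@[simp] lemma homeo_mul_apply {α : Type*} [TopologicalSpace α] (f g : α ≃ₜ α) (ξ : α) :
    (f * g) ξ = f (g ξ) := rfl

@[simp] lemma homeo_one_apply {α : Type*} [TopologicalSpace α] (ξ : α) :
    (1 : α ≃ₜ α) ξ = ξ := rfl

@[simp] lemma homeo_inv_apply {α : Type*} [TopologicalSpace α] (f : α ≃ₜ α) (ξ : α) :
    (f⁻¹ : α ≃ₜ α) ξ = f.symm ξ := rfl

/-- The data of the basic homeomorphisms `x`, `y`, `x_s`, `y_s`, `p_n` of the Cantor
set, together with their recursive defining equations. -/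
structure LMData where
  x : Cantor ≃ₜ Cantor
  y : Cantor ≃ₜ Cantor
  xx : List Bool → Cantor ≃ₜ Cantor
  yy : List Bool → Cantor ≃ₜ Cantor
  p : ℕ → Cantor ≃ₜ Cantor
  hx00 : ∀ η, x (cat [false, false] η) = cat [false] η
  hx01 : ∀ η, x (cat [false, true] η) = cat [true, false] η
  hx1 : ∀ η, x (cat [true] η) = cat [true, true] η
  hy00 : ∀ η, y (cat [false, false] η) = cat [false] (y η)
  hy01 : ∀ η, y (cat [false, true] η) = cat [true, false] (y.symm η)
  hy1 : ∀ η, y (cat [true] η) = cat [true, true] (y η)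
  hxx : ∀ s η, xx s (cat s η) = cat s (x η)
  hxx' : ∀ s ξ, ¬ IsPrefixOf s ξ → xx s ξ = ξ
  hyy : ∀ s η, yy s (cat s η) = cat s (y η)
  hyy' : ∀ s ξ, ¬ IsPrefixOf s ξ → yy s ξ = ξ
  hp1 : ∀ n k η, k < n → p n (cat (List.replicate k true ++ [false]) η) =
      cat (List.replicate (k + 1) true ++ [false]) η
  hp2 : ∀ n η, p n (cat (List.replicate n true ++ [false]) η) =
      cat (List.replicate (n + 1) true) η
  hp3 : ∀ n η, p n (cat (List.replicate (n + 1) true) η) = cat [false] η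

/-- Thompson's group `T`, generated by all `x_s` and all `p_n`. -/
def Tgrp (D : LMData) : Subgroup (Cantor ≃ₜ Cantor) :=
  Subgroup.closure (Set.range D.xx ∪ Set.range D.p)

/-- The group `Ŝ`, generated by all `x_s`, all `y_s` and all `p_n`. -/
def Shat (D : LMData) : Subgroup (Cantor ≃ₜ Cantor) :=
  Subgroup.closure (Set.range D.xx ∪ Set.range D.yy ∪ Set.range D.p)

/-- The homeomorphism `y₁₀ y₁₁₀⁻¹` (right-action word: first `y₁₀`, then `y₁₁₀⁻¹`). -/
def sgen (D : LMData) : Cantor ≃ₜ Cantor :=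
  (D.yy [true, true, false])⁻¹ * D.yy [true, false]

/-- The group `S`, generated by Thompson's group `T` together with `y₁₀ y₁₁₀⁻¹`. -/
def Sgrp (D : LMData) : Subgroup (Cantor ≃ₜ Cantor) :=
  Subgroup.closure (↑(Tgrp D) ∪ {sgen D})

/-- The Lodha–Moore group `_yG_y`, generated by all `x_s` and all `y_s`. -/
def LMgrp (D : LMData) : Subgroup (Cantor ≃ₜ Cantor) :=
  Subgroup.closure (Set.range D.xx ∪ Set.range D.yy)

/-- Two finite binary sequences are independent if neither is a prefix of the other. -/
def Indep (s t : List Bool) : Prop := ¬ s <+: t ∧ ¬ t <+: s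

-- basic cat lemmas
lemma cat_nil (η : Cantor) : cat [] η = η := by
  funext n; simp [cat]

lemma cat_get {s : List Bool} {η : Cantor} {i : ℕ} (h : i < s.length) :
    cat s η i = s.get ⟨i, h⟩ := dif_pos h

lemma cat_append (s t : List Bool) (η : Cantor) : cat (s ++ t) η = cat s (cat t η) := by
  funext n
  simp only [cat, List.length_append]
  by_cases h1 : n < s.length
  · rw [dif_pos (by omega), dif_pos h1]
    simp only [List.get_eq_getElem]
    exact List.getElem_append_left h1
  · by_cases h2 : n < s.length + t.length
    · rw [dif_pos h2, dif_neg h1, dif_pos (by omega)]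
      simp only [List.get_eq_getElem]
      exact List.getElem_append_right (le_of_not_gt h1)
    · rw [dif_neg h2, dif_neg h1, dif_neg (by omega)]
      congr 1; omega

lemma prefix_of_cat_eq {u v : List Bool} {α β : Cantor} (h : cat u α = cat v β)
    (hle : u.length ≤ v.length) : u <+: v := by
  rw [List.prefix_iff_eq_take]
  apply List.ext_get (by simp [hle])
  intro i h1 h2
  have hi : i < u.length := by simpa using h1
  have := congrFun h i
  rw [cat_get hi, cat_get (by omega)] at this
  simp only [List.get_eq_getElem] at this ⊢
  rw [List.getElem_take]
  exact this

lemma indep_not_prefix {u v : List Bool} (h : Indep u v) (η : Cantor) :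
    ¬ IsPrefixOf u (cat v η) := by
  rintro ⟨η', he⟩
  rcases le_total u.length v.length with hle | hle
  · exact h.1 (prefix_of_cat_eq he.symm hle)
  · exact h.2 (prefix_of_cat_eq he hle)

lemma indep_of_ne_of_length_eq {u v : List Bool} (hne : u ≠ v) (hl : u.length = v.length) :
    Indep u v := by
  constructor
  · intro hp; exact hne (List.IsPrefix.eq_of_length hp hl)
  · intro hp; exact hne (List.IsPrefix.eq_of_length hp hl.symm).symm

-- ====================== Maps framework ======================

def Maps (g : Cantor ≃ₜ Cantor) (s t : List Bool) : Prop :=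
  ∀ η, g (cat s η) = cat t η

namespace LMwork

abbrev rep1 (a : ℕ) : List Bool := List.replicate a true
abbrev rep0 (c : ℕ) : List Bool := List.replicate c false

lemma maps_congr {g : Cantor ≃ₜ Cantor} {s t s' t' : List Bool} (h : Maps g s t)
    (e1 : s = s') (e2 : t = t') : Maps g s' t' := e1 ▸ e2 ▸ h

lemma maps_append {g : Cantor ≃ₜ Cantor} {s t : List Bool} (h : Maps g s t) (v : List Bool) :
    Maps g (s ++ v) (t ++ v) := fun η => by
  rw [cat_append, cat_append]; exact h _

lemma maps_mul {g h : Cantor ≃ₜ Cantor} {s t u : List Bool}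
    (hg : Maps g s t) (hh : Maps h t u) : Maps (h * g) s u := fun η => by
  rw [homeo_mul_apply, hg η, hh η]

lemma maps_inv {g : Cantor ≃ₜ Cantor} {s t : List Bool} (h : Maps g s t) :
    Maps g⁻¹ t s := fun η => by
  rw [← h η, homeo_inv_apply, g.symm_apply_apply]

variable (D : LMData)

lemma maps_fix_xx (u v : List Bool) (h : Indep u v) : Maps (D.xx u) v v := fun η =>
  D.hxx' u _ (indep_not_prefix h η)

-- x generator facts (via xx [])
lemma xx_nil : D.xx [] = D.x := by
  apply Homeomorph.ext; intro ξ
  have := D.hxx [] ξ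
  rwa [cat_nil, cat_nil] at this

lemma maps_X_a : Maps (D.xx []) [false, false] [false] := by
  rw [xx_nil]; exact D.hx00

lemma maps_X_b : Maps (D.xx []) [false, true] [true, false] := by
  rw [xx_nil]; exact D.hx01

lemma maps_X_c : Maps (D.xx []) [true] [true, true] := by
  rw [xx_nil]; exact D.hx1

lemma maps_xx_a (u : List Bool) : Maps (D.xx u) (u ++ [false, false]) (u ++ [false]) := fun η => by
  rw [cat_append, cat_append, D.hxx, D.hx00]

lemma maps_xx_b (u : List Bool) : Maps (D.xx u) (u ++ [false, true]) (u ++ [true, false]) := fun η => by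
  rw [cat_append, cat_append, D.hxx, D.hx01]

lemma maps_xx_c (u : List Bool) : Maps (D.xx u) (u ++ [true]) (u ++ [true, true]) := fun η => by
  rw [cat_append, cat_append, D.hxx, D.hx1]

lemma maps_p_k {n k : ℕ} (h : k < n) :
    Maps (D.p n) (rep1 k ++ [false]) (rep1 (k + 1) ++ [false]) := fun η => D.hp1 n k η h

lemma maps_p_top (n : ℕ) : Maps (D.p n) (rep1 n ++ [false]) (rep1 (n + 1)) := D.hp2 n

lemma maps_p_wrap (n : ℕ) : Maps (D.p n) (rep1 (n + 1)) [false] := D.hp3 n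

-- memberships
lemma xx_mem (u : List Bool) : D.xx u ∈ Tgrp D :=
  Subgroup.subset_closure (Or.inl ⟨u, rfl⟩)

lemma p_mem (n : ℕ) : D.p n ∈ Tgrp D :=
  Subgroup.subset_closure (Or.inr ⟨n, rfl⟩)

lemma T_le_S : Tgrp D ≤ Sgrp D := fun g hg => Subgroup.subset_closure (Or.inl hg)

lemma sgen_mem : sgen D ∈ Sgrp D := Subgroup.subset_closure (Or.inr rfl)

-- conjugation
lemma conj_yy {g : Cantor ≃ₜ Cantor} {s t : List Bool} (h : Maps g s t) :
    g * D.yy s * g⁻¹ = D.yy t := by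
  apply Homeomorph.ext; intro ξ
  have happ : (g * D.yy s * g⁻¹) ξ = g (D.yy s (g⁻¹ ξ)) := rfl
  by_cases hp : IsPrefixOf t ξ
  · obtain ⟨η, rfl⟩ := hp
    rw [happ]
    have h1 : g⁻¹ (cat t η) = cat s η := maps_inv h η
    rw [h1, D.hyy, h, D.hyy]
  · rw [happ]
    have h2 : ¬ IsPrefixOf s (g⁻¹ ξ) := by
      rintro ⟨η, he⟩
      apply hp
      refine ⟨η, ?_⟩
      have : g (g⁻¹ ξ) = ξ := by rw [homeo_inv_apply]; exact g.apply_symm_apply ξ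
      rw [← this, he, h η]
    rw [D.hyy' s _ h2, D.hyy' t _ hp]
    rw [homeo_inv_apply]; exact g.apply_symm_apply ξ

-- the G-elements
def Gel (s t : List Bool) : Cantor ≃ₜ Cantor := (D.yy t)⁻¹ * D.yy s

lemma Gel_split (s u t : List Bool) : Gel D s t = Gel D u t * Gel D s u := by
  unfold Gel; group

lemma Gel_mem_of_maps {g : Cantor ≃ₜ Cantor} {s t : List Bool} (hg : g ∈ Tgrp D)
    (h1 : Maps g s [true, false]) (h2 : Maps g t [true, true, false]) :
    Gel D s t ∈ Sgrp D := by
  have e1 : D.yy s = g⁻¹ * D.yy [true, false] * g := by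
    rw [← conj_yy D h1]; group
  have e2 : D.yy t = g⁻¹ * D.yy [true, true, false] * g := by
    rw [← conj_yy D h2]; group
  have : Gel D s t = g⁻¹ * sgen D * g := by
    unfold Gel sgen; rw [e1, e2]; group
  rw [this]
  have hgS := T_le_S D hg
  exact mul_mem (mul_mem (inv_mem hgS) (sgen_mem D)) hgS

end LMwork

namespace LMwork
variable (D : LMData)

-- small list facts
lemma one_cons_rep1 (a : ℕ) : [true] ++ rep1 a = rep1 (a+1) := by
  simp [List.replicate_succ]

lemma cons0_rep0 (c : ℕ) : [false] ++ rep0 c = rep0 (c+1) := by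
  simp [List.replicate_succ]

-- the helper element h = p1 * (xx [true])⁻¹ : [0] ↦ [1,0], [1,0] ↦ [1,1,0]
def helh : Cantor ≃ₜ Cantor := D.p 1 * (D.xx [true])⁻¹

lemma helh_mem : helh D ∈ Tgrp D :=
  mul_mem (p_mem D 1) (inv_mem (xx_mem D [true]))

lemma maps_helh_0 : Maps (helh D) [false] [true, false] := by
  have fix : Maps (D.xx [true]) [false] [false] :=
    maps_fix_xx D [true] [false] (by constructor <;> decide)
  have step : Maps (D.p 1) [false] [true, false] :=
    maps_congr (maps_p_k D (show 0 < 1 by omega)) (by simp) (by decide)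
  exact maps_mul (maps_inv fix) step

lemma maps_helh_10 : Maps (helh D) [true, false] [true, true, false] := by
  have st1 : Maps (D.xx [true])⁻¹ [true, false] [true, false, false] :=
    maps_inv (maps_congr (maps_xx_a D [true]) (by decide) (by decide))
  have st2 : Maps (D.p 1) [true, false, false] [true, true, false] :=
    maps_congr (maps_append (maps_p_top D 1) [false]) (by decide) (by decide)
  exact maps_mul st1 st2

-- T-element for wrap-adjacent pairs (1^A, 0^C)
lemma TA_wrap : ∀ C A : ℕ, 1 ≤ A → 1 ≤ C → 3 ≤ A + C →
    ∃ g ∈ Tgrp D, Maps g (rep1 A) [true, false] ∧ Maps g (rep0 C) [true, true, false] := by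
  intro C
  induction C with
  | zero => intro A _ h _; omega
  | succ c ih =>
    intro A hA hC hs
    rcases Nat.eq_zero_or_pos c with rfl | hc
    · -- C = 1, A ≥ 2
      obtain ⟨A', rfl⟩ : ∃ A', A = A' + 2 := ⟨A - 2, by omega⟩
      set q := D.p (A' + 1) with hq
      have m1 : Maps q (rep1 (A' + 2)) [false] := maps_p_wrap D (A' + 1)
      have m2 : Maps q [false] [true, false] :=
        maps_congr (maps_p_k D (show 0 < A' + 1 by omega)) (by simp) (by decide)
      refine ⟨helh D * q, mul_mem (helh_mem D) (p_mem D (A' + 1)), ?_, ?_⟩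
      · exact maps_mul m1 (maps_helh_0 D)
      · refine maps_mul (maps_congr m2 (by decide) rfl) (maps_helh_10 D)
    · obtain ⟨g', hg', h1, h0⟩ := ih (A + 1) (by omega) hc (by omega)
      obtain ⟨A', rfl⟩ : ∃ A', A = A' + 1 := ⟨A - 1, by omega⟩
      obtain ⟨c', rfl⟩ : ∃ c', c = c' + 1 := ⟨c - 1, by omega⟩
      refine ⟨g' * D.xx [], mul_mem hg' (xx_mem D []), ?_, ?_⟩
      · refine maps_mul ?_ h1
        refine maps_congr (maps_append (maps_X_c D) (rep1 A')) ?_ ?_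
        · simp [List.replicate_succ]
        · simp [List.replicate_succ]
      · refine maps_mul ?_ h0
        refine maps_congr (maps_append (maps_X_a D) (rep0 c')) ?_ ?_
        · simp [List.replicate_succ]
        · simp [List.replicate_succ]

-- T-element for pairs ([1,0]1^a , [1,1]0^c)
lemma TA1 (a c : ℕ) :
    ∃ g ∈ Tgrp D, Maps g ([true, false] ++ rep1 a) [true, false] ∧
      Maps g ([true, true] ++ rep0 c) [true, true, false] := by
  obtain ⟨g', hg', h1, h0⟩ := TA_wrap D (c + 1) (a + 2) (by omega) (by omega) (by omega)
  refine ⟨g' * D.p 1, mul_mem hg' (p_mem D 1), ?_, ?_⟩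
  · refine maps_mul ?_ h1
    refine maps_congr (maps_append (maps_p_top D 1) (rep1 a)) ?_ ?_
    · simp [List.replicate_succ]
    · simp [List.replicate_succ]
  · refine maps_mul ?_ h0
    refine maps_congr (maps_append (maps_p_wrap D 1) (rep0 c)) ?_ ?_
    · simp [List.replicate_succ]
    · simp [List.replicate_succ]

-- T-element for pairs ([0]1^a , [1]0^c), not both zero
lemma TA_nil (a c : ℕ) (hnc : ¬(a = 0 ∧ c = 0)) :
    ∃ g ∈ Tgrp D, Maps g ([false] ++ rep1 a) [true, false] ∧
      Maps g ([true] ++ rep0 c) [true, true, false] := by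
  rcases c with _ | c'
  · obtain ⟨a', rfl⟩ : ∃ a', a = a' + 1 := ⟨a - 1, by omega⟩
    obtain ⟨g', hg', h1, h0⟩ := TA1 D a' 0
    refine ⟨g' * D.xx [], mul_mem hg' (xx_mem D []), ?_, ?_⟩
    · refine maps_mul ?_ h1
      refine maps_congr (maps_append (maps_X_b D) (rep1 a')) ?_ rfl
      simp [List.replicate_succ]
    · refine maps_mul ?_ h0
      exact maps_congr (maps_X_c D) (by simp) (by simp)
  · obtain ⟨g', hg', h1, h0⟩ := TA1 D a c'
    refine ⟨g' * D.p 1, mul_mem hg' (p_mem D 1), ?_, ?_⟩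
    · refine maps_mul ?_ h1
      refine maps_congr (maps_append (maps_p_k D (show 0 < 1 by omega)) (rep1 a)) ?_ ?_
      · simp
      · simp
    · refine maps_mul ?_ h0
      refine maps_congr (maps_append (maps_p_top D 1) (rep0 c')) ?_ ?_
      · simp [List.replicate_succ]
      · simp [List.replicate_succ]

end LMwork

namespace LMwork
variable (D : LMData)

-- generic prefix moves on a common prefix
lemma maps_p0_01 (v : List Bool) : Maps (D.p 0) ([false] ++ v) ([true] ++ v) :=
  maps_append (maps_congr (maps_p_top D 0) (by simp) (by decide)) v

lemma maps_p1inv_10 (v : List Bool) : Maps (D.p 1)⁻¹ ([true, false] ++ v) ([false] ++ v) :=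
  maps_inv (maps_append (maps_congr (maps_p_k D (show 0 < 1 by omega)) (by simp) (by decide)) v)

lemma maps_Xinv_11 (v : List Bool) : Maps (D.xx [])⁻¹ ([true, true] ++ v) ([true] ++ v) :=
  maps_inv (maps_append (maps_X_c D) v)

lemma maps_X_00 (v : List Bool) : Maps (D.xx []) ([false, false] ++ v) ([false] ++ v) :=
  maps_append (maps_X_a D) v

lemma maps_X_01 (v : List Bool) : Maps (D.xx []) ([false, true] ++ v) ([true, false] ++ v) :=
  maps_append (maps_X_b D) v

-- T-element for general adjacent pairs (w 0 1^a, w 1 0^c)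
lemma TA_w_aux : ∀ (n : ℕ) (w : List Bool) (a c : ℕ), w.length = n →
    ¬(w = [] ∧ a = 0 ∧ c = 0) →
    ∃ g ∈ Tgrp D, Maps g (w ++ [false] ++ rep1 a) [true, false] ∧
      Maps g (w ++ [true] ++ rep0 c) [true, true, false] := by
  intro n
  induction n with
  | zero =>
    intro w a c hw hnc
    have hwe : w = [] := List.length_eq_zero_iff.mp hw
    subst hwe
    obtain ⟨g, hg, h1, h0⟩ := TA_nil D a c (by tauto)
    exact ⟨g, hg, maps_congr h1 (by simp) rfl, maps_congr h0 (by simp) rfl⟩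
  | succ n ih =>
    intro w a c hw hnc
    rcases w with _ | ⟨b, w'⟩
    · simp at hw
    rcases w' with _ | ⟨b', w''⟩
    · -- w = [b]
      rcases b with _ | _
      · -- w = [false]
        obtain ⟨g', hg', h1, h0⟩ := TA_nil D a (c + 1) (by omega)
        refine ⟨g' * D.xx [], mul_mem hg' (xx_mem D []), ?_, ?_⟩
        · refine maps_mul ?_ h1
          exact maps_congr (maps_X_00 D (rep1 a)) (by simp) rfl
        · refine maps_mul ?_ h0
          refine maps_congr (maps_X_01 D (rep0 c)) (by simp) ?_
          simp [List.replicate_succ]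
      · -- w = [true]
        obtain ⟨g, hg, h1, h0⟩ := TA1 D a c
        exact ⟨g, hg, maps_congr h1 (by simp) rfl, maps_congr h0 (by simp) rfl⟩
    · -- w = b :: b' :: w''
      rcases b with _ | _ <;> rcases b' with _ | _
      · -- false :: false :: w''  : apply X, recurse on false :: w''
        obtain ⟨g', hg', h1, h0⟩ := ih (false :: w'') a c (by simpa using hw) (by simp)
        refine ⟨g' * D.xx [], mul_mem hg' (xx_mem D []), ?_, ?_⟩
        · refine maps_mul ?_ h1
          exact maps_congr (maps_X_00 D (w'' ++ [false] ++ rep1 a)) (by simp) (by simp)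
        · refine maps_mul ?_ h0
          exact maps_congr (maps_X_00 D (w'' ++ [true] ++ rep0 c)) (by simp) (by simp)
      · -- false :: true :: w'' : apply p0 then X⁻¹, recurse on true :: w''
        obtain ⟨g', hg', h1, h0⟩ := ih (true :: w'') a c (by simpa using hw) (by simp)
        refine ⟨g' * ((D.xx [])⁻¹ * D.p 0),
          mul_mem hg' (mul_mem (inv_mem (xx_mem D [])) (p_mem D 0)), ?_, ?_⟩
        · refine maps_mul (maps_mul ?_ (maps_Xinv_11 D (w'' ++ [false] ++ rep1 a))) h1
          exact maps_congr (maps_p0_01 D ([true] ++ w'' ++ [false] ++ rep1 a)) (by simp) (by simp)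
        · refine maps_mul (maps_mul ?_ (maps_Xinv_11 D (w'' ++ [true] ++ rep0 c))) h0
          exact maps_congr (maps_p0_01 D ([true] ++ w'' ++ [true] ++ rep0 c)) (by simp) (by simp)
      · -- true :: false :: w'' : apply p1⁻¹, recurse on false :: w''
        obtain ⟨g', hg', h1, h0⟩ := ih (false :: w'') a c (by simpa using hw) (by simp)
        refine ⟨g' * (D.p 1)⁻¹, mul_mem hg' (inv_mem (p_mem D 1)), ?_, ?_⟩
        · refine maps_mul ?_ h1
          exact maps_congr (maps_p1inv_10 D (w'' ++ [false] ++ rep1 a)) (by simp) (by simp)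
        · refine maps_mul ?_ h0
          exact maps_congr (maps_p1inv_10 D (w'' ++ [true] ++ rep0 c)) (by simp) (by simp)
      · -- true :: true :: w'' : apply X⁻¹, recurse on true :: w''
        obtain ⟨g', hg', h1, h0⟩ := ih (true :: w'') a c (by simpa using hw) (by simp)
        refine ⟨g' * (D.xx [])⁻¹, mul_mem hg' (inv_mem (xx_mem D [])), ?_, ?_⟩
        · refine maps_mul ?_ h1
          exact maps_congr (maps_Xinv_11 D (w'' ++ [false] ++ rep1 a)) (by simp) (by simp)
        · refine maps_mul ?_ h0
          exact maps_congr (maps_Xinv_11 D (w'' ++ [true] ++ rep0 c)) (by simp) (by simp)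

lemma TA_w (w : List Bool) (a c : ℕ) (hnc : ¬(w = [] ∧ a = 0 ∧ c = 0)) :
    ∃ g ∈ Tgrp D, Maps g (w ++ [false] ++ rep1 a) [true, false] ∧
      Maps g (w ++ [true] ++ rep0 c) [true, true, false] :=
  TA_w_aux D w.length w a c rfl hnc

-- membership of the adjacent-pair G-elements
lemma GADJ (w : List Bool) (a c : ℕ) (hnc : ¬(w = [] ∧ a = 0 ∧ c = 0)) :
    Gel D (w ++ [false] ++ rep1 a) (w ++ [true] ++ rep0 c) ∈ Sgrp D := by
  obtain ⟨g, hg, h1, h0⟩ := TA_w D w a c hnc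
  exact Gel_mem_of_maps D hg h1 h0

lemma GWRAP (A C : ℕ) (hA : 1 ≤ A) (hC : 1 ≤ C) (hs : 3 ≤ A + C) :
    Gel D (rep1 A) (rep0 C) ∈ Sgrp D := by
  obtain ⟨g, hg, h1, h0⟩ := TA_wrap D C A hA hC hs
  exact Gel_mem_of_maps D hg h1 h0

end LMwork

namespace LMwork
variable (D : LMData)

-- ============== ord machinery ==============

def ordL : List Bool → ℕ
  | [] => 0
  | b :: l => (if b then 2 ^ l.length else 0) + ordL l

@[simp] lemma ordL_nil : ordL [] = 0 := rfl
@[simp] lemma ordL_cons (b : Bool) (l : List Bool) :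
    ordL (b :: l) = (if b then 2 ^ l.length else 0) + ordL l := rfl

lemma ordL_lt (v : List Bool) : ordL v < 2 ^ v.length := by
  induction v with
  | nil => simp
  | cons b l ih =>
    simp only [ordL_cons, List.length_cons, pow_succ]
    rcases b with _ | _ <;> simp <;> omega

lemma ordL_append (u v : List Bool) : ordL (u ++ v) = ordL u * 2 ^ v.length + ordL v := by
  induction u with
  | nil => simp
  | cons b l ih =>
    simp only [List.cons_append, ordL_cons, ih, List.length_append, List.length_cons]
    rcases b with _ | _
    · simp
    · simp [pow_add]; ring

@[simp] lemma ordL_rep0 (c : ℕ) : ordL (rep0 c) = 0 := by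
  induction c with
  | zero => simp
  | succ c ih => simp [List.replicate_succ, ih]

@[simp] lemma ordL_rep1 (a : ℕ) : ordL (rep1 a) = 2 ^ a - 1 := by
  induction a with
  | zero => simp
  | succ a ih =>
    have := Nat.two_pow_pos a
    simp [List.replicate_succ, ih, pow_succ]
    omega

lemma ordL_inj : ∀ {v v' : List Bool}, v.length = v'.length → ordL v = ordL v' → v = v' := by
  intro v
  induction v with
  | nil => intro v' hl _; exact (List.length_eq_zero_iff.mp hl.symm).symm
  | cons b l ih =>
    intro v' hl ho
    rcases v' with _ | ⟨b', l'⟩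
    · simp at hl
    have hll : l.length = l'.length := by simpa using hl
    have hb : b = b' := by
      by_contra hbb
      have h1 := ordL_lt l
      have h2 := ordL_lt l'
      rcases b with _ | _ <;> rcases b' with _ | _ <;> simp_all <;> omega
    subst hb
    have : ordL l = ordL l' := by
      rcases b with _ | _ <;> simp_all [hll]
    rw [ih hll this]

-- decompositions
lemma dec0 : ∀ (v : List Bool), false ∈ v → ∃ w k, v = w ++ [false] ++ rep1 k := by
  intro v
  induction v using List.reverseRecOn with
  | nil => intro h; simp at h
  | append_singleton l b ihl =>
    intro h
    rcases b with _ | _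
    · exact ⟨l, 0, by simp⟩
    · have hl : false ∈ l := by
        rcases List.mem_append.mp h with h1 | h1
        · exact h1
        · simp at h1
      obtain ⟨w, k, rfl⟩ := ihl hl
      refine ⟨w, k + 1, ?_⟩
      simp [List.replicate_succ', List.append_assoc]

lemma dec1 : ∀ (v : List Bool), true ∈ v → ∃ w k, v = w ++ [true] ++ rep0 k := by
  intro v
  induction v using List.reverseRecOn with
  | nil => intro h; simp at h
  | append_singleton l b ihl =>
    intro h
    rcases b with _ | _
    · have hl : true ∈ l := by
        rcases List.mem_append.mp h with h1 | h1
        · exact h1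
        · simp at h1
      obtain ⟨w, k, rfl⟩ := ihl hl
      refine ⟨w, k + 1, ?_⟩
      simp [List.replicate_succ', List.append_assoc]
    · exact ⟨l, 0, by simp⟩

lemma all_true (v : List Bool) (h : false ∉ v) : v = rep1 v.length := by
  apply List.eq_replicate_of_mem
  intro b hb
  rcases b with _ | _
  · exact absurd hb h
  · rfl

lemma all_false (v : List Bool) (h : true ∉ v) : v = rep0 v.length := by
  apply List.eq_replicate_of_mem
  intro b hb
  rcases b with _ | _
  · rfl
  · exact absurd hb h

-- ============== chain lemma ==============

lemma CLF : ∀ (d : ℕ) (v v' : List Bool), 2 ≤ v.length → v.length = v'.length →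
    ordL v < ordL v' → ordL v' - ordL v ≤ d → Gel D v v' ∈ Sgrp D := by
  intro d
  induction d with
  | zero => intro v v' _ _ h1 h2; omega
  | succ d ih =>
    intro v v' h2 hl hlt hle
    have hf : false ∈ v := by
      by_contra hnf
      have hv1 : v = rep1 v.length := all_true v hnf
      have hb := ordL_lt v'
      rw [hv1, ordL_rep1] at hlt
      rw [← hl] at hb
      omega
    obtain ⟨w, k, rfl⟩ := dec0 v hf
    set v := w ++ [false] ++ rep1 k with hv
    set u := w ++ [true] ++ rep0 k with hu
    have hlen : u.length = v.length := by simp [hu, hv]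
    have hP := Nat.two_pow_pos k
    have hord : ordL u = ordL v + 1 := by
      rw [hu, hv, ordL_append, ordL_append, ordL_append, ordL_append]
      simp [ordL_rep0, ordL_rep1]
      ring_nf
      omega
    have hnc : ¬(w = [] ∧ k = 0 ∧ k = 0) := by
      rintro ⟨rfl, rfl, -⟩
      rw [hv] at h2
      simp at h2
    have g1 : Gel D v u ∈ Sgrp D := GADJ D w k k (by tauto)
    by_cases he : u = v'
    · rw [← he]; exact g1
    · have hlt2 : ordL u < ordL v' := by
        have h3 : ordL u ≤ ordL v' := by omega
        rcases lt_or_eq_of_le h3 with h4 | h4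
        · exact h4
        · exact absurd (ordL_inj (hlen.trans hl) h4) he
      have g2 := ih u v' (by omega) (hlen.trans hl) hlt2 (by omega)
      rw [Gel_split D v u v']
      exact mul_mem g2 g1

lemma CL (n : ℕ) (hn : 2 ≤ n) (v v' : List Bool) (hv : v.length = n) (hv' : v'.length = n)
    (hne : v ≠ v') : Gel D v v' ∈ Sgrp D := by
  have hll : v.length = v'.length := by omega
  rcases lt_trichotomy (ordL v) (ordL v') with h | h | h
  · exact CLF D _ v v' (by omega) hll h le_rfl
  · exact absurd (ordL_inj hll h) hne
  · have hw : Gel D (rep1 n) (rep0 n) ∈ Sgrp D := GWRAP D n n (by omega) (by omega) (by omega)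
    have hlt0 : v' ≠ rep0 n → Gel D (rep0 n) v' ∈ Sgrp D := by
      intro h0
      refine CLF D (ordL v') (rep0 n) v' (by simp; omega) (by simp [hv']) ?_ (by simp)
      simp only [ordL_rep0]
      rcases Nat.eq_zero_or_pos (ordL v') with hz | hz
      · exact absurd (ordL_inj (show (rep0 n : List Bool).length = v'.length by simp [hv'])
          (by simp [hz])).symm h0
      · exact hz
    have hlt1 : v ≠ rep1 n → Gel D v (rep1 n) ∈ Sgrp D := by
      intro h1
      have hb := ordL_lt v
      rw [hv] at hb
      have hne' : ordL v ≠ ordL (rep1 n) := fun he => h1 (ordL_inj (by simp [hv]) he)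
      have hle' : ordL v ≤ ordL (rep1 n) := by
        rw [ordL_rep1]; exact Nat.le_pred_of_lt hb
      exact CLF D (ordL (rep1 n) - ordL v) v (rep1 n) (by omega) (by simp [hv])
        (lt_of_le_of_ne hle' hne') le_rfl
    by_cases h1 : v = rep1 n
    · by_cases h0 : v' = rep0 n
      · rw [h1, h0]; exact hw
      · rw [Gel_split D v (rep0 n) v', h1]
        exact mul_mem (hlt0 h0) hw
    · by_cases h0 : v' = rep0 n
      · rw [Gel_split D v (rep1 n) v', h0]
        exact mul_mem hw (hlt1 h1)
      · rw [Gel_split D v (rep1 n) v', Gel_split D (rep1 n) (rep0 n) v']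
        exact mul_mem (mul_mem (hlt0 h0) hw) (hlt1 h1)

end LMwork

namespace LMwork
variable (D : LMData)

lemma master (s t : List Bool) (h : Indep s t) : Gel D s t ∈ Sgrp D := by
  have hs : s ≠ [] := fun e => h.1 (e ▸ List.nil_prefix)
  have ht : t ≠ [] := fun e => h.2 (e ▸ List.nil_prefix)
  have hsl : 1 ≤ s.length := List.length_pos_iff.mpr hs
  have htl : 1 ≤ t.length := List.length_pos_iff.mpr ht
  set n := max s.length t.length + 1 with hn
  have hn2 : 2 ≤ n := by omega
  have hsn : s.length + 1 ≤ n := by omega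
  have htn : t.length + 1 ≤ n := by omega
  obtain ⟨A, hAlen, gsA⟩ : ∃ A : List Bool, A.length = n ∧ Gel D s A ∈ Sgrp D := by
    by_cases hf : false ∈ s
    · obtain ⟨w, a, rfl⟩ := dec0 s hf
      have hwl : (w ++ [false] ++ rep1 a).length = w.length + 1 + a := by simp; omega
      refine ⟨w ++ [true] ++ rep0 (n - w.length - 1), by simp; omega, ?_⟩
      apply GADJ D w a (n - w.length - 1)
      rintro ⟨rfl, rfl, hcc⟩
      simp at hcc; omega
    · have hs1 : s = rep1 s.length := all_true s hf
      refine ⟨rep0 n, by simp, ?_⟩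
      rw [hs1]
      exact GWRAP D s.length n hsl (by omega) (by omega)
  obtain ⟨B, hBlen, gBt⟩ : ∃ B : List Bool, B.length = n ∧ Gel D B t ∈ Sgrp D := by
    by_cases hf : true ∈ t
    · obtain ⟨w, c, rfl⟩ := dec1 t hf
      have hwl : (w ++ [true] ++ rep0 c).length = w.length + 1 + c := by simp; omega
      refine ⟨w ++ [false] ++ rep1 (n - w.length - 1), by simp; omega, ?_⟩
      apply GADJ D w (n - w.length - 1) c
      rintro ⟨rfl, hcc, rfl⟩
      simp at hcc; omega
    · have ht1 : t = rep0 t.length := all_false t hf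
      refine ⟨rep1 n, by simp, ?_⟩
      rw [ht1]
      exact GWRAP D n t.length (by omega) htl (by omega)
  by_cases hAB : A = B
  · rw [← hAB] at gBt
    rw [Gel_split D s A t]
    exact mul_mem gBt gsA
  · rw [Gel_split D s A t, Gel_split D A B t]
    exact mul_mem (mul_mem gBt (CL D n hn2 A B hAlen hBlen hAB)) gsA

end LMwork

/-- for independent `s, t`, the element `y_s y_t⁻¹` (right-action word:
first `y_s`, then `y_t⁻¹`) lies in `S`. -/
theorem statement5 (D : LMData) (s t : List Bool) (h : Indep s t) :
    (D.yy t)⁻¹ * D.yy s ∈ Sgrp D :=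
  LMwork.master D s t h
end

section
/- For all m ≥ 0, n ≥ 1 and integers c_1, …, c_n with c_1 + ⋯ + c_n = 0, the product y_{1^{m+1}0}^{c_1} y_{1^{m+2}0}^{c_2} ⋯ y_{1^{m+n}0}^{c_n} lies in the group S. -/
/-- Abbreviation for `y_{1^k 0}`. -/
def Yk (D : LMData) (k : ℕ) : Cantor ≃ₜ Cantor :=
  D.yy (List.replicate k true ++ [false])

lemma cat_rep_lt {i k : ℕ} (h : k < i) (η : Cantor) :
    cat (List.replicate i true ++ [false]) η k = true := by
  have hk : k < (List.replicate i true ++ [false]).length := by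
    simp; omega
  simp only [cat, dif_pos hk, List.get_eq_getElem]
  rw [List.getElem_append_left (by simpa using h)]
  simp

lemma cat_rep_self (i : ℕ) (η : Cantor) :
    cat (List.replicate i true ++ [false]) η i = false := by
  have hk : i < (List.replicate i true ++ [false]).length := by
    simp
  simp only [cat, dif_pos hk, List.get_eq_getElem]
  rw [List.getElem_append_right (by simp)]
  simp

lemma not_prefix_rep {i j : ℕ} (hij : i ≠ j) (η : Cantor) :
    ¬ IsPrefixOf (List.replicate j true ++ [false])
      (cat (List.replicate i true ++ [false]) η) := by
  rintro ⟨ζ, hζ⟩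
  rcases lt_or_gt_of_ne hij with h | h
  · have := congrFun hζ i
    rw [cat_rep_self, cat_rep_lt h] at this
    exact Bool.noConfusion this
  · have := congrFun hζ j
    rw [cat_rep_lt h, cat_rep_self] at this
    exact Bool.noConfusion this

lemma Yk_comm (D : LMData) {i j : ℕ} (hij : i ≠ j) :
    Commute (Yk D i) (Yk D j) := by
  have key : Yk D i * Yk D j = Yk D j * Yk D i := by
    apply Homeomorph.ext; intro ξ
    simp only [homeo_mul_apply]
    by_cases hi : IsPrefixOf (List.replicate i true ++ [false]) ξ
    · obtain ⟨η, rfl⟩ := hi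
      rw [Yk, Yk, D.hyy' _ _ (not_prefix_rep hij η), D.hyy,
        D.hyy' _ _ (not_prefix_rep hij (D.y η))]
    · by_cases hj : IsPrefixOf (List.replicate j true ++ [false]) ξ
      · obtain ⟨η, rfl⟩ := hj
        rw [Yk, Yk, D.hyy' _ _ (not_prefix_rep (Ne.symm hij) η), D.hyy,
          D.hyy' _ _ (not_prefix_rep (Ne.symm hij) (D.y η))]
      · simp only [Yk, D.hyy' _ _ hi, D.hyy' _ _ hj]
  exact key

lemma Yk_conj (D : LMData) {n j : ℕ} (hj : j < n) :
    D.p n * Yk D j * (D.p n)⁻¹ = Yk D (j + 1) := by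
  apply Homeomorph.ext; intro ξ
  simp only [homeo_mul_apply, homeo_inv_apply]
  by_cases h : IsPrefixOf (List.replicate (j + 1) true ++ [false]) ξ
  · obtain ⟨η, rfl⟩ := h
    have h1 : (D.p n).symm (cat (List.replicate (j + 1) true ++ [false]) η)
        = cat (List.replicate j true ++ [false]) η := by
      rw [← D.hp1 n j η hj, Homeomorph.symm_apply_apply]
    rw [h1, Yk, D.hyy, D.hp1 n j (D.y η) hj, Yk, D.hyy]
  · have h2 : ¬ IsPrefixOf (List.replicate j true ++ [false]) ((D.p n).symm ξ) := by
      rintro ⟨η, hη⟩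
      exact h ⟨η, by rw [← D.hp1 n j η hj, ← hη, Homeomorph.apply_symm_apply]⟩
    rw [Yk, D.hyy' _ _ h2, Homeomorph.apply_symm_apply, Yk, D.hyy' _ _ h]

lemma p_mem_Sgrp (D : LMData) (n : ℕ) : D.p n ∈ Sgrp D :=
  Subgroup.subset_closure (Or.inl (Subgroup.subset_closure (Or.inr ⟨n, rfl⟩)))

lemma sgen_mem_Sgrp (D : LMData) : sgen D ∈ Sgrp D :=
  Subgroup.subset_closure (Or.inr rfl)

lemma g_mem_Sgrp (D : LMData) (k : ℕ) :
    Yk D (k + 1) * (Yk D (k + 2))⁻¹ ∈ Sgrp D := by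
  induction k with
  | zero =>
    have h := (Yk_comm D (by norm_num : (1:ℕ) ≠ 2)).inv_right.eq
    have e : Yk D 1 * (Yk D 2)⁻¹ = sgen D := by
      rw [h, sgen]
      rfl
    rw [e]; exact sgen_mem_Sgrp D
  | succ k ih =>
    have ha := Yk_conj D (show k + 1 < k + 3 by omega)
    have hb := Yk_conj D (show k + 2 < k + 3 by omega)
    have key : D.p (k + 3) * (Yk D (k + 1) * (Yk D (k + 2))⁻¹) * (D.p (k + 3))⁻¹
        = (D.p (k + 3) * Yk D (k + 1) * (D.p (k + 3))⁻¹)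
          * (D.p (k + 3) * Yk D (k + 2) * (D.p (k + 3))⁻¹)⁻¹ := by
      group
    rw [ha, hb] at key
    rw [show k + 1 + 1 = k + 2 from rfl, show k + 1 + 2 = k + 3 from rfl, ← key]
    exact mul_mem (mul_mem (p_mem_Sgrp D _) ih) (inv_mem (p_mem_Sgrp D _))

lemma rev_prod_succ {G : Type*} [Group G] {n : ℕ} (f : Fin (n + 1) → G) :
    (List.ofFn f).reverse.prod
      = (List.ofFn fun i : Fin n => f i.succ).reverse.prod * f 0 := by
  rw [List.ofFn_succ, List.reverse_cons, List.prod_append]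
  simp

lemma statement6_aux (D : LMData) :
    ∀ n m (c : Fin (n + 1) → ℤ), (∑ i, c i = 0) →
      (List.ofFn fun i : Fin (n + 1) => Yk D (m + 1 + (i : ℕ)) ^ c i).reverse.prod
        ∈ Sgrp D := by
  intro n
  induction n with
  | zero =>
    intro m c hc
    have h0 : c 0 = 0 := by simpa using hc
    simp [h0]
  | succ n ih =>
    intro m c hc
    set c' : Fin (n + 1) → ℤ := Fin.cons (c 0 + c 1) (fun i => c i.succ.succ) with hc'
    have hsum' : ∑ i, c' i = 0 := by
      rw [hc', Fin.sum_cons]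
      rw [Fin.sum_univ_succ, Fin.sum_univ_succ] at hc
      simpa [add_assoc] using hc
    have hM := ih (m + 1) c' hsum'
    rw [rev_prod_succ] at hM
    rw [rev_prod_succ, rev_prod_succ]
    have hfun : (fun i : Fin n => Yk D (m + 1 + ((i.succ.succ : Fin (n+2)) : ℕ)) ^ c i.succ.succ)
        = fun i : Fin n => Yk D (m + 3 + (i : ℕ)) ^ c i.succ.succ := by
      funext i
      congr 2
      simp [Fin.val_succ]
      omega
    have hfun' : (fun i : Fin n => Yk D (m + 1 + 1 + ((i.succ : Fin (n+1)) : ℕ)) ^ c' i.succ)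
        = fun i : Fin n => Yk D (m + 3 + (i : ℕ)) ^ c i.succ.succ := by
      funext i
      rw [hc', Fin.cons_succ]
      congr 2
      simp [Fin.val_succ]
      omega
    rw [hfun'] at hM
    rw [hfun]
    set B0 := (List.ofFn fun i : Fin n => Yk D (m + 3 + (i : ℕ)) ^ c i.succ.succ).reverse.prod
      with hB0
    have hc0 : c' 0 = c 0 + c 1 := by rw [hc', Fin.cons_zero]
    simp only [Fin.val_zero, Fin.val_succ, Nat.add_zero, hc0, Fin.succ_zero_eq_one, Fin.val_one] at hM ⊢
    -- hM : B0 * Yk D (m + 2) ^ (c 0 + c 1) ∈ Sgrp D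
    -- goal : B0 * Yk D (m + 1 + 1) ^ c 1 * Yk D (m + 1) ^ c 0 ∈ Sgrp D
    have hcomm : Commute (Yk D (m + 1)) (Yk D (m + 2)) := Yk_comm D (by omega)
    have hg : (Yk D (m + 1) * (Yk D (m + 2))⁻¹) ^ c 0 ∈ Sgrp D :=
      zpow_mem (g_mem_Sgrp D m) _
    have key : B0 * Yk D (m + 2) ^ c 1 * Yk D (m + 1) ^ c 0
        = (B0 * Yk D (m + 2) ^ (c 0 + c 1)) * (Yk D (m + 1) * (Yk D (m + 2))⁻¹) ^ c 0 := by
      have hz := (hcomm.zpow_zpow (c 0) (-(c 0))).eq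
      rw [hcomm.inv_right.mul_zpow, inv_zpow, ← zpow_neg, hz]
      group
    rw [show m + 1 + 1 = m + 2 from rfl, key]
    exact mul_mem hM hg

/-- a product `y_{1^{m+1}0}^{c₁} ⋯ y_{1^{m+n}0}^{cₙ}` with exponent sum `0`
lies in `S` (right-action word, hence the reversed product in composition order). -/
theorem statement6 (D : LMData) (m n : ℕ) (hn : 1 ≤ n) (c : Fin n → ℤ)
    (hc : ∑ i, c i = 0) :
    (List.ofFn fun i : Fin n =>
        (D.yy (List.replicate (m + 1 + (i : ℕ)) true ++ [false])) ^ (c i)).reverse.prod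
      ∈ Sgrp D := by
  obtain ⟨n', rfl⟩ : ∃ n', n = n' + 1 := ⟨n - 1, by omega⟩
  exact statement6_aux D n' m c hc
end

section
/- Let s_1, …, s_n be finite binary sequences none of which is of the form 1^m (m ≥ 0, including the empty sequence), and let t_1, …, t_n be integers with t_1 + ⋯ + t_n = 0. Then the product y_{s_1}^{t_1} ⋯ y_{s_n}^{t_n} lies in the group S. -/
namespace St7

lemma cat_eval_lt (s : List Bool) (η : Cantor) (k : ℕ) (h : k < s.length) :
    cat s η k = s.get ⟨k, h⟩ := dif_pos h

lemma cat_eval_ge (s : List Bool) (η : Cantor) (k : ℕ) (h : ¬ k < s.length) :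
    cat s η k = η (k - s.length) := dif_neg h

lemma cat_nil (η : Cantor) : cat [] η = η := by
  funext n; simp [cat]

lemma cat_append (s t : List Bool) (η : Cantor) :
    cat (s ++ t) η = cat s (cat t η) := by
  funext n
  unfold cat
  by_cases h1 : n < s.length
  · have h2 : n < (s ++ t).length := by simp; omega
    rw [dif_pos h2, dif_pos h1]
    simp [List.get_eq_getElem, List.getElem_append_left h1]
  · by_cases h3 : n < (s ++ t).length
    · have h4 : n - s.length < t.length := by simp at h3; omega
      rw [dif_pos h3, dif_neg h1, dif_pos h4]
      simp [List.get_eq_getElem]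
      rw [List.getElem_append_right (by omega)]
    · have h4 : ¬ n - s.length < t.length := by simp at h3; omega
      rw [dif_neg h3, dif_neg h1, dif_neg h4]
      congr 1
      simp
      omega

lemma prefix_cat (s : List Bool) (η : Cantor) : IsPrefixOf s (cat s η) := ⟨η, rfl⟩

lemma isPrefixOf_eval {s : List Bool} {ξ : Cantor} (h : IsPrefixOf s ξ) (k : ℕ)
    (hk : k < s.length) : ξ k = s.get ⟨k, hk⟩ := by
  obtain ⟨η, rfl⟩ := h; exact cat_eval_lt s η k hk

/-- Syntactic incomparability of two finite sequences. -/
def Incomp (u w : List Bool) : Prop :=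
  ∃ k, ∃ (h1 : k < u.length) (h2 : k < w.length), u.get ⟨k, h1⟩ ≠ w.get ⟨k, h2⟩

lemma Incomp.symm {u w : List Bool} (h : Incomp u w) : Incomp w u := by
  obtain ⟨k, h1, h2, hne⟩ := h; exact ⟨k, h2, h1, Ne.symm hne⟩

lemma Incomp.not_prefix {u w : List Bool} (h : Incomp u w) (θ : Cantor) :
    ¬ IsPrefixOf u (cat w θ) := by
  obtain ⟨k, h1, h2, hne⟩ := h
  intro hp
  exact hne (((isPrefixOf_eval hp k h1).symm).trans (cat_eval_lt w θ k h2))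

lemma incomp_head {x y : Bool} (a b : List Bool) (h : x ≠ y) : Incomp (x :: a) (y :: b) :=
  ⟨0, Nat.succ_pos _, Nat.succ_pos _, by simpa⟩

lemma incomp_cons (x : Bool) {a b : List Bool} (h : Incomp a b) : Incomp (x :: a) (x :: b) := by
  obtain ⟨k, h1, h2, hne⟩ := h
  exact ⟨k + 1, by simpa using Nat.succ_lt_succ h1, by simpa using Nat.succ_lt_succ h2, by
    simpa using hne⟩

lemma incomp_append (v : List Bool) {a b : List Bool} (h : Incomp a b) :
    Incomp (v ++ a) (v ++ b) := by
  induction v with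
  | nil => simpa
  | cons x v ih => exact incomp_cons x ih

variable {D : LMData}

/-- From a prefix-replacement equation for `g`, get one for `g.symm`. -/
lemma symm_cat {g : Cantor ≃ₜ Cantor} {a b : List Bool}
    (hg : ∀ η, g (cat a η) = cat b η) (η : Cantor) : g.symm (cat b η) = cat a η := by
  have : g (cat a η) = cat b η := hg η
  rw [← this, Homeomorph.symm_apply_apply]

lemma not_prefix_symm {g : Cantor ≃ₜ Cantor} {a b : List Bool}
    (hg : ∀ η, g (cat a η) = cat b η) {ξ : Cantor} (h : ¬ IsPrefixOf b ξ) :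
    ¬ IsPrefixOf a (g.symm ξ) := by
  rintro ⟨η, hη⟩
  exact h ⟨η, by rw [← hg η, ← hη, Homeomorph.apply_symm_apply]⟩

lemma yy_symm_cat (D : LMData) (s : List Bool) (η : Cantor) :
    (D.yy s).symm (cat s η) = cat s (D.y.symm η) := by
  have : D.yy s (cat s (D.y.symm η)) = cat s η := by
    rw [D.hyy s (D.y.symm η), Homeomorph.apply_symm_apply]
  rw [← this, Homeomorph.symm_apply_apply]

lemma yy_symm_fix (D : LMData) {s : List Bool} {ξ : Cantor} (h : ¬ IsPrefixOf s ξ) :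
    (D.yy s).symm ξ = ξ := by
  nth_rewrite 1 [← D.hyy' s ξ h]
  exact Homeomorph.symm_apply_apply _ _

lemma xx_mem (D : LMData) (s : List Bool) : D.xx s ∈ Tgrp D :=
  Subgroup.subset_closure (Or.inl ⟨s, rfl⟩)

lemma p_mem (D : LMData) (n : ℕ) : D.p n ∈ Tgrp D :=
  Subgroup.subset_closure (Or.inr ⟨n, rfl⟩)

lemma T_le_S (D : LMData) : Tgrp D ≤ Sgrp D :=
  fun _ hx => Subgroup.subset_closure (Or.inl hx)

lemma sgen_mem (D : LMData) : sgen D ∈ Sgrp D :=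
  Subgroup.subset_closure (Or.inr rfl)

/-- `xx []` agrees with `x`. -/
lemma xx_nil (D : LMData) : D.xx [] = D.x := by
  apply Homeomorph.ext
  intro ξ
  have := D.hxx [] ξ
  rwa [cat_nil, cat_nil] at this

/-- The relation `Rel u w`: `y_w⁻¹ y_u ∈ S`. -/
def Rel (D : LMData) (u w : List Bool) : Prop := (D.yy w)⁻¹ * D.yy u ∈ Sgrp D

lemma rel_refl (D : LMData) (u : List Bool) : Rel D u u := by
  unfold Rel
  rw [inv_mul_cancel]
  exact one_mem _

lemma Rel.symm {u w : List Bool} (h : Rel D u w) : Rel D w u := by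
  have := inv_mem h
  rwa [mul_inv_rev, inv_inv] at this

lemma Rel.trans {u v w : List Bool} (h1 : Rel D u v) (h2 : Rel D v w) : Rel D u w := by
  have := mul_mem h2 h1
  rwa [mul_assoc, ← mul_assoc (D.yy v), mul_inv_cancel, one_mul] at this

/-- "There is an element of `T` mapping the cones `[10]` and `[110]` onto cones `[u]`
and `[w]` by prefix replacement." -/
def GoodPair (D : LMData) (u w : List Bool) : Prop :=
  ∃ g : Cantor ≃ₜ Cantor, g ∈ Tgrp D ∧ (∀ η, g (cat [true, false] η) = cat u η) ∧
    (∀ η, g (cat [true, true, false] η) = cat w η)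

lemma goodPair_base (D : LMData) : GoodPair D [true, false] [true, true, false] :=
  ⟨1, one_mem _, fun _ => rfl, fun _ => rfl⟩

lemma GoodPair.step {u w u' w' : List Bool} (h : GoodPair D u w) {g : Cantor ≃ₜ Cantor}
    (hg : g ∈ Tgrp D) (hu : ∀ η, g (cat u η) = cat u' η)
    (hw : ∀ η, g (cat w η) = cat w' η) : GoodPair D u' w' := by
  obtain ⟨f, hf, hfu, hfw⟩ := h
  exact ⟨g * f, mul_mem hg hf, fun η => by rw [homeo_mul_apply, hfu, hu],
    fun η => by rw [homeo_mul_apply, hfw, hw]⟩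

lemma GoodPair.stepInv {u w u' w' : List Bool} (h : GoodPair D u w) {g : Cantor ≃ₜ Cantor}
    (hg : g ∈ Tgrp D) (hu : ∀ η, g (cat u' η) = cat u η)
    (hw : ∀ η, g (cat w' η) = cat w η) : GoodPair D u' w' :=
  h.step (inv_mem hg) (symm_cat hu) (symm_cat hw)

lemma incomp_10_110 : Incomp [true, false] [true, true, false] :=
  incomp_cons true (incomp_head _ _ (by decide))

/-- A prefix of `ξ` and an `Incomp`-incompatible list cannot both be prefixes. -/
lemma not_both_prefix {u w : List Bool} (h : Incomp u w) {ξ : Cantor}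
    (hu : IsPrefixOf u ξ) (hw : IsPrefixOf w ξ) : False := by
  obtain ⟨k, h1, h2, hne⟩ := h
  exact hne ((isPrefixOf_eval hu k h1).symm.trans (isPrefixOf_eval hw k h2))

/-- Main conjugation lemma: a good pair of incomparable cones gives `Rel`. -/
lemma GoodPair.rel {u w : List Bool} (h : GoodPair D u w) (hic : Incomp u w) :
    Rel D u w := by
  obtain ⟨g, hg, hgu, hgw⟩ := h
  have key : (D.yy w)⁻¹ * D.yy u = g * sgen D * g⁻¹ := by
    apply Homeomorph.ext
    intro ξ
    simp only [homeo_mul_apply, homeo_inv_apply, sgen]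
    by_cases hu : IsPrefixOf u ξ
    · obtain ⟨η, rfl⟩ := hu
      have h1 : g.symm (cat u η) = cat [true, false] η := symm_cat hgu η
      rw [h1, D.hyy [true, false] η, D.hyy u η,
        yy_symm_fix D (incomp_10_110.symm.not_prefix _), hgu,
        yy_symm_fix D (hic.symm.not_prefix _)]
    · by_cases hw : IsPrefixOf w ξ
      · obtain ⟨η, rfl⟩ := hw
        have h1 : g.symm (cat w η) = cat [true, true, false] η := symm_cat hgw η
        rw [h1, D.hyy' [true, false] _ (incomp_10_110.not_prefix _),
          yy_symm_cat D [true, true, false] η, hgw,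
          D.hyy' u _ (fun hp => hu hp), yy_symm_cat D w η]
      · have h10 : ¬ IsPrefixOf [true, false] (g.symm ξ) := not_prefix_symm hgu hu
        have h110 : ¬ IsPrefixOf [true, true, false] (g.symm ξ) := not_prefix_symm hgw hw
        rw [D.hyy' [true, false] _ h10, yy_symm_fix D h110, Homeomorph.apply_symm_apply,
          D.hyy' u _ hu, yy_symm_fix D hw]
  unfold Rel
  rw [key]
  have hgS : g ∈ Sgrp D := T_le_S D hg
  exact mul_mem (mul_mem hgS (sgen_mem D)) (inv_mem hgS)

/-- Incomparable `y`'s commute. -/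
lemma yy_commute {u w : List Bool} (h : Incomp u w) : Commute (D.yy u) (D.yy w) := by
  apply Homeomorph.ext
  intro ξ
  simp only [homeo_mul_apply]
  by_cases hu : IsPrefixOf u ξ
  · obtain ⟨η, rfl⟩ := hu
    rw [D.hyy' w _ (h.symm.not_prefix _), D.hyy u η, D.hyy' w _ (h.symm.not_prefix _)]
  · by_cases hw : IsPrefixOf w ξ
    · obtain ⟨η, rfl⟩ := hw
      rw [D.hyy w η, D.hyy' u _ (h.not_prefix _), D.hyy' u _ (h.not_prefix _), D.hyy w η]
    · rw [D.hyy' w _ hw, D.hyy' u _ hu, D.hyy' w _ hw]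

/-! ### Basic prefix-replacement moves -/

lemma split_cat (s t : List Bool) (st : List Bool) (h : st = s ++ t) (η : Cantor) :
    cat st η = cat s (cat t η) := by rw [h, cat_append]

-- p₀ : [0] ↔ [1]
lemma m_p0_01 (D : LMData) (η : Cantor) : D.p 0 (cat [false] η) = cat [true] η :=
  D.hp2 0 η

lemma m_p0_10 (D : LMData) (η : Cantor) : D.p 0 (cat [true] η) = cat [false] η :=
  D.hp3 0 η

-- p₁ : [0] → [10] → [11] → [0]
lemma m_p1_a (D : LMData) (η : Cantor) : D.p 1 (cat [false] η) = cat [true, false] η :=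
  D.hp1 1 0 η (by norm_num)

lemma m_p1_b (D : LMData) (η : Cantor) : D.p 1 (cat [true, false] η) = cat [true, true] η :=
  D.hp2 1 η

lemma m_p1_c (D : LMData) (η : Cantor) : D.p 1 (cat [true, true] η) = cat [false] η :=
  D.hp3 1 η

lemma m_p1_b' (D : LMData) (η : Cantor) :
    D.p 1 (cat [true, false, false] η) = cat [true, true, false] η := by
  rw [split_cat [true, false] [false] [true, false, false] rfl,
    split_cat [true, true] [false] [true, true, false] rfl, m_p1_b]

lemma m_p1_c' (D : LMData) (η : Cantor) :
    D.p 1 (cat [true, true, false] η) = cat [false, false] η := by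
  rw [split_cat [true, true] [false] [true, true, false] rfl,
    split_cat [false] [false] [false, false] rfl, m_p1_c]

-- p₂ : [0] → [10] → [110] → [111] → [0]
lemma m_p2_a (D : LMData) (η : Cantor) : D.p 2 (cat [false] η) = cat [true, false] η :=
  D.hp1 2 0 η (by norm_num)

lemma m_p2_b (D : LMData) (η : Cantor) :
    D.p 2 (cat [true, false] η) = cat [true, true, false] η :=
  D.hp1 2 1 η (by norm_num)

lemma m_p2_c (D : LMData) (η : Cantor) :
    D.p 2 (cat [true, true, false] η) = cat [true, true, true] η :=
  D.hp2 2 η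

-- x = xx [] : [00]→[0], [01]→[10], [1]→[11]
lemma m_x_00 (D : LMData) (η : Cantor) : D.xx [] (cat [false, false] η) = cat [false] η := by
  rw [xx_nil]; exact D.hx00 η

lemma m_x_01 (D : LMData) (η : Cantor) :
    D.xx [] (cat [false, true] η) = cat [true, false] η := by
  rw [xx_nil]; exact D.hx01 η

lemma m_x_1 (D : LMData) (η : Cantor) : D.xx [] (cat [true] η) = cat [true, true] η := by
  rw [xx_nil]; exact D.hx1 η

lemma m_x_10 (D : LMData) (η : Cantor) :
    D.xx [] (cat [true, false] η) = cat [true, true, false] η := by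
  rw [split_cat [true] [false] [true, false] rfl,
    split_cat [true, true] [false] [true, true, false] rfl, m_x_1]

lemma m_x_001 (D : LMData) (η : Cantor) :
    D.xx [] (cat [false, false, true] η) = cat [false, true] η := by
  rw [split_cat [false, false] [true] [false, false, true] rfl,
    split_cat [false] [true] [false, true] rfl, m_x_00]

-- xx [1] : [100]→[10], [101]→[110]
lemma m_xt_100 (D : LMData) (η : Cantor) :
    D.xx [true] (cat [true, false, false] η) = cat [true, false] η := by
  rw [split_cat [true] [false, false] [true, false, false] rfl,
    split_cat [true] [false] [true, false] rfl, D.hxx [true], D.hx00]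

lemma m_xt_101 (D : LMData) (η : Cantor) :
    D.xx [true] (cat [true, false, true] η) = cat [true, true, false] η := by
  rw [split_cat [true] [false, true] [true, false, true] rfl,
    split_cat [true, true] [false] [true, true, false] rfl, D.hxx [true], D.hx01,
    split_cat [true] [false] [true, false] rfl]
  simp [← cat_append]

/-! ### Reachability between cones inside `T` -/

def Reach (D : LMData) (u v : List Bool) : Prop :=
  ∃ g : Cantor ≃ₜ Cantor, g ∈ Tgrp D ∧ ∀ η, g (cat u η) = cat v η

lemma reach_refl (D : LMData) (u : List Bool) : Reach D u u := ⟨1, one_mem _, fun _ => rfl⟩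

lemma Reach.trans {u v w : List Bool} (h1 : Reach D u v) (h2 : Reach D v w) :
    Reach D u w := by
  obtain ⟨g1, hg1, he1⟩ := h1
  obtain ⟨g2, hg2, he2⟩ := h2
  exact ⟨g2 * g1, mul_mem hg2 hg1, fun η => by rw [homeo_mul_apply, he1, he2]⟩

lemma Reach.symm {u v : List Bool} (h : Reach D u v) : Reach D v u := by
  obtain ⟨g, hg, he⟩ := h
  exact ⟨g⁻¹, inv_mem hg, symm_cat he⟩

lemma Reach.append {u v : List Bool} (h : Reach D u v) (s : List Bool) :
    Reach D (u ++ s) (v ++ s) := by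
  obtain ⟨g, hg, he⟩ := h
  exact ⟨g, hg, fun η => by rw [cat_append, he, cat_append]⟩

lemma reach_1_0 (D : LMData) : Reach D [true] [false] := ⟨D.p 0, p_mem D 0, m_p0_10 D⟩

lemma reach_0_1 (D : LMData) : Reach D [false] [true] := ⟨D.p 0, p_mem D 0, m_p0_01 D⟩

lemma reach_0_10 (D : LMData) : Reach D [false] [true, false] := ⟨D.p 1, p_mem D 1, m_p1_a D⟩

lemma reach_1_11 (D : LMData) : Reach D [true] [true, true] := ⟨D.xx [], xx_mem D [], m_x_1 D⟩

lemma reach_1_10 (D : LMData) : Reach D [true] [true, false] :=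
  (reach_1_0 D).trans (reach_0_10 D)

lemma reach_one (D : LMData) : ∀ v : List Bool, v ≠ [] → Reach D [true] v := by
  intro v
  induction v using List.reverseRecOn with
  | nil => intro h; exact absurd rfl h
  | append_singleton w b ih =>
    intro _
    rcases eq_or_ne w [] with rfl | hw
    · cases b
      · simpa using reach_1_0 D
      · exact reach_refl D [true]
    · have h1 : Reach D [true] ([true] ++ [b]) := by
        cases b
        · exact reach_1_10 D
        · exact reach_1_11 D
      exact h1.trans ((ih hw).append [b])

lemma reach_of_ne {u v : List Bool} (hu : u ≠ []) (hv : v ≠ []) : Reach D u v :=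
  ((reach_one D u hu).symm).trans (reach_one D v hv)

/-- Transport a good pair sitting inside a cone `[d]` to any nonempty cone `[v]`. -/
lemma GoodPair.transport {d u1 w1 : List Bool} (h : GoodPair D (d ++ u1) (d ++ w1))
    {v : List Bool} (hr : Reach D d v) : GoodPair D (v ++ u1) (v ++ w1) := by
  obtain ⟨g, hg, he⟩ := hr
  exact h.step hg (fun η => by rw [cat_append, he, ← cat_append])
    (fun η => by rw [cat_append, he, ← cat_append])

/-! ### Good pairs and the edge relations -/

lemma pair_e8 (D : LMData) : GoodPair D [false] [true, false] :=
  (goodPair_base D).stepInv (p_mem D 2) (m_p2_a D) (m_p2_b D)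

lemma pair_e4 (D : LMData) : GoodPair D [true, true] [false, false] :=
  (goodPair_base D).step (p_mem D 1) (m_p1_b D) (m_p1_c' D)

lemma pair_00_01 (D : LMData) : GoodPair D [false, false] [false, true] :=
  (pair_e8 D).stepInv (xx_mem D []) (m_x_00 D) (m_x_01 D)

lemma pair_110_111 (D : LMData) : GoodPair D [true, true, false] [true, true, true] :=
  (goodPair_base D).step (p_mem D 2) (m_p2_b D) (m_p2_c D)

lemma pair_100_101 (D : LMData) : GoodPair D [true, false, false] [true, false, true] :=
  (goodPair_base D).stepInv (xx_mem D [true]) (m_xt_100 D) (m_xt_101 D)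

lemma pair_01_10 (D : LMData) : GoodPair D [false, true] [true, false] :=
  (goodPair_base D).stepInv (xx_mem D []) (m_x_01 D) (m_x_10 D)

lemma pair_001_01 (D : LMData) : GoodPair D [false, false, true] [false, true] :=
  (pair_01_10 D).stepInv (xx_mem D []) (m_x_001 D) (m_x_01 D)

lemma rel_e8 (D : LMData) : Rel D [false] [true, false] :=
  (pair_e8 D).rel (incomp_head _ _ (by decide))

lemma rel_e4 (D : LMData) : Rel D [true, true] [false, false] :=
  (pair_e4 D).rel (incomp_head _ _ (by decide))

lemma rel_F (D : LMData) {v : List Bool} (hv : v ≠ []) :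
    Rel D (v ++ [false]) (v ++ [true]) := by
  have h : GoodPair D ([false] ++ [false]) ([false] ++ [true]) := pair_00_01 D
  exact (h.transport (reach_of_ne (by simp) hv)).rel
    (incomp_append v (incomp_head _ _ (by decide)))

lemma rel_A (D : LMData) {v : List Bool} (hv : v ≠ []) :
    Rel D (v ++ [false]) (v ++ [true, false]) := by
  have h : GoodPair D ([true] ++ [false]) ([true] ++ [true, false]) := goodPair_base D
  exact (h.transport (reach_one D v hv)).rel
    (incomp_append v (incomp_head _ _ (by decide)))

lemma rel_C (D : LMData) {v : List Bool} (hv : v ≠ []) :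
    Rel D (v ++ [true, false]) (v ++ [true, true]) := by
  have h : GoodPair D ([true] ++ [true, false]) ([true] ++ [true, true]) := pair_110_111 D
  exact (h.transport (reach_one D v hv)).rel
    (incomp_append v (incomp_cons true (incomp_head _ _ (by decide))))

lemma rel_D (D : LMData) {v : List Bool} (hv : v ≠ []) :
    Rel D (v ++ [false, true]) (v ++ [true]) := by
  have h : GoodPair D ([false] ++ [false, true]) ([false] ++ [true]) := pair_001_01 D
  exact (h.transport (reach_of_ne (by simp) hv)).rel
    (incomp_append v (incomp_head _ _ (by decide)))

/-! ### Connectivity: every admissible cone is related to `[0]` -/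

lemma rel_01_0 (D : LMData) : Rel D [false, true] [false] :=
  (((rel_F D (v := [false]) (by simp)).symm.trans (rel_e4 D).symm).trans
    (rel_F D (v := [true]) (by simp)).symm).trans (rel_e8 D).symm

lemma rel_snoc_true (D : LMData) : ∀ u : List Bool, false ∈ u → Rel D (u ++ [true]) u := by
  intro u
  induction u using List.reverseRecOn with
  | nil => intro h; simp at h
  | append_singleton v c ih =>
    intro hu
    cases c
    · rcases eq_or_ne v [] with rfl | hv
      · exact rel_01_0 D
      · rw [List.append_assoc]
        exact (rel_D D hv).trans (rel_F D hv).symm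
    · have hv : false ∈ v := by
        rcases List.mem_append.mp hu with h | h
        · exact h
        · simp at h
      have hvne : v ≠ [] := by rintro rfl; simp at hv
      rw [List.append_assoc]
      exact ((rel_C D hvne).symm.trans (rel_A D hvne).symm).trans (rel_F D hvne)

lemma rel_strip (D : LMData) (u : List Bool) (hu : false ∈ u) (b : Bool) :
    Rel D (u ++ [b]) u := by
  cases b
  · have hune : u ≠ [] := by rintro rfl; simp at hu
    exact (rel_F D hune).trans (rel_snoc_true D u hu)
  · exact rel_snoc_true D u hu

lemma rel_ones (D : LMData) : ∀ k : ℕ, Rel D (List.replicate (k + 1) true ++ [false]) [false] := by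
  intro k
  induction k with
  | zero => exact (rel_e8 D).symm
  | succ k ih =>
    rw [List.replicate_succ' (n := k + 1), List.append_assoc]
    exact ((rel_A D (by simp)).symm).trans ih

lemma rel_zero (D : LMData) : ∀ a : List Bool, false ∈ a → Rel D a [false] := by
  intro a
  induction a using List.reverseRecOn with
  | nil => intro h; simp at h
  | append_singleton u b ih =>
    intro ha
    by_cases hfu : false ∈ u
    · exact (rel_strip D u hfu b).trans (ih hfu)
    · have hb : b = false := by
        rcases List.mem_append.mp ha with h | h
        · exact absurd h hfu
        · simpa using (List.mem_singleton.mp h).symm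
      subst hb
      have hut : u = List.replicate u.length true := by
        apply List.eq_replicate_length.mpr
        intro x hx
        cases x
        · exact absurd hx hfu
        · rfl
      rcases Nat.eq_zero_or_pos u.length with h0 | hpos
      · have : u = [] := List.length_eq_zero_iff.mp h0
        subst this
        exact rel_refl D [false]
      · obtain ⟨k, hk⟩ := Nat.exists_eq_add_of_lt hpos
        have hk' : u.length = k + 1 := by omega
        have h := rel_ones D k
        rw [← hk', ← hut] at h
        exact h

lemma rel_adm (D : LMData) (a b : List Bool) (ha : false ∈ a) (hb : false ∈ b) :
    Rel D a b :=
  (rel_zero D a ha).trans (rel_zero D b hb).symm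

/-! ### Powers -/

lemma trichotomy : ∀ u w : List Bool, Incomp u w ∨ u <+: w ∨ w <+: u := by
  intro u
  induction u with
  | nil => intro w; exact Or.inr (Or.inl List.nil_prefix)
  | cons x u ih =>
    intro w
    cases w with
    | nil => exact Or.inr (Or.inr List.nil_prefix)
    | cons y w =>
      rcases eq_or_ne x y with rfl | hxy
      · rcases ih w with h | h | h
        · exact Or.inl (incomp_cons x h)
        · exact Or.inr (Or.inl (List.cons_prefix_cons.mpr ⟨rfl, h⟩))
        · exact Or.inr (Or.inr (List.cons_prefix_cons.mpr ⟨rfl, h⟩))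
      · exact Or.inl (incomp_head _ _ hxy)

lemma pow_pair {a b : List Bool} (hic : Incomp a b) (hrel : Rel D a b) (t : ℤ) :
    (D.yy b) ^ (-t) * (D.yy a) ^ t ∈ Sgrp D := by
  have hc : Commute ((D.yy b)⁻¹) (D.yy a) := ((yy_commute hic).symm).inv_left
  have key : ((D.yy b)⁻¹ * D.yy a) ^ t = (D.yy b) ^ (-t) * (D.yy a) ^ t := by
    rw [hc.mul_zpow, inv_zpow, zpow_neg]
  rw [← key]
  exact zpow_mem hrel t

lemma q_mem (D : LMData) (a b : List Bool) (ha : false ∈ a) (hb : false ∈ b) (t : ℤ) :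
    (D.yy b) ^ (-t) * (D.yy a) ^ t ∈ Sgrp D := by
  rcases trichotomy a b with hic | hcomp
  · exact pow_pair hic (rel_adm D a b ha hb) t
  · -- comparable: go through a third cone `c`
    have hane : a ≠ [] := by rintro rfl; simp at ha
    have hbne : b ≠ [] := by rintro rfl; simp at hb
    obtain ⟨x, a', rfl⟩ := List.exists_cons_of_ne_nil hane
    obtain ⟨y, b', rfl⟩ := List.exists_cons_of_ne_nil hbne
    have hxy : x = y := by
      rcases hcomp with h | h
      · exact (List.cons_prefix_cons.mp h).1
      · exact (List.cons_prefix_cons.mp h).1.symm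
    subst hxy
    set c : List Bool := [!x, false] with hc
    have hca : Incomp c (x :: a') := incomp_head _ _ (by cases x <;> decide)
    have hcb : Incomp c (x :: b') := incomp_head _ _ (by cases x <;> decide)
    have hcadm : false ∈ c := by simp [hc]
    have h1 := pow_pair hcb (rel_adm D c (x :: b') hcadm hb) t
    have h2 := pow_pair hca.symm (rel_adm D (x :: a') c ha hcadm) t
    have key : (D.yy (x :: b')) ^ (-t) * (D.yy (x :: a')) ^ t =
        ((D.yy (x :: b')) ^ (-t) * (D.yy c) ^ t) *
          ((D.yy c) ^ (-t) * (D.yy (x :: a')) ^ t) := by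
      group
    rw [key]
    exact mul_mem h1 h2

/-! ### The telescoping product -/

lemma prod_mem (D : LMData) :
    ∀ (N : ℕ) (L : List (List Bool × ℤ)), L.length ≤ N → (∀ p ∈ L, false ∈ p.1) →
      (L.map Prod.snd).sum = 0 →
      (L.map fun p => (D.yy p.1) ^ p.2).reverse.prod ∈ Sgrp D := by
  intro N
  induction N with
  | zero =>
    intro L hL _ _
    have : L = [] := List.length_eq_zero_iff.mp (Nat.le_zero.mp hL)
    subst this
    simpa using one_mem _
  | succ N ih =>
    intro L hL hadm hsum
    match L with
    | [] => simpa using one_mem _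
    | [(a, t)] =>
      have ht : t = 0 := by simpa using hsum
      subst ht
      simpa using one_mem _
    | (a, t1) :: (b, t2) :: L' =>
      have ha : false ∈ a := hadm (a, t1) (by simp)
      have hb : false ∈ b := hadm (b, t2) (by simp)
      have hsum' : (((b, t1 + t2) :: L').map Prod.snd).sum = 0 := by
        simp only [List.map_cons, List.sum_cons] at hsum ⊢
        linarith
      have hadm' : ∀ p ∈ (b, t1 + t2) :: L', false ∈ p.1 := by
        intro p hp
        rcases List.mem_cons.mp hp with rfl | hp
        · exact hb
        · exact hadm p (by simp [hp])
      have hrec := ih ((b, t1 + t2) :: L') (by simpa using Nat.le_of_succ_le_succ hL)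
        hadm' hsum'
      have hq := q_mem D a b ha hb t1
      have key : ((((a, t1) :: (b, t2) :: L').map fun p => (D.yy p.1) ^ p.2).reverse).prod =
          ((((b, t1 + t2) :: L').map fun p => (D.yy p.1) ^ p.2).reverse).prod *
            ((D.yy b) ^ (-t1) * (D.yy a) ^ t1) := by
        simp only [List.map_cons, List.reverse_cons, List.prod_append, List.prod_cons,
          List.prod_nil, List.append_assoc]
        rw [zpow_add]
        group
      rw [key]
      exact mul_mem hrec hq

lemma false_mem_of_adm {l : List Bool} (h : ∀ m : ℕ, l ≠ List.replicate m true) :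
    false ∈ l := by
  by_contra hf
  apply h l.length
  apply List.eq_replicate_length.mpr
  intro x hx
  cases x
  · exact absurd hx hf
  · rfl

end St7


/-- a product `y_{s₁}^{t₁} ⋯ y_{sₙ}^{tₙ}` with no `sᵢ` of the form `1^m`
and with exponent sum `0` lies in `S` (right-action word, reversed in composition
order). -/
theorem statement7 (D : LMData) (n : ℕ) (s : Fin n → List Bool)
    (hs : ∀ i : Fin n, ∀ m : ℕ, s i ≠ List.replicate m true)
    (t : Fin n → ℤ) (ht : ∑ i, t i = 0) :
    (List.ofFn fun i => (D.yy (s i)) ^ (t i)).reverse.prod ∈ Sgrp D := by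
  have hmap : (List.ofFn fun i => (D.yy (s i)) ^ (t i)) =
      (List.ofFn fun i => (s i, t i)).map fun p => (D.yy p.1) ^ p.2 := by
    rw [List.map_ofFn]
    rfl
  rw [hmap]
  apply St7.prod_mem D (List.ofFn fun i => (s i, t i)).length _ le_rfl
  · intro p hp
    obtain ⟨i, hi⟩ := List.mem_ofFn.mp hp
    rw [← hi]
    exact St7.false_mem_of_adm (hs i)
  · rw [List.map_ofFn, List.sum_ofFn]
    simpa using ht
end

section
/- For every finite binary sequence s ∈ {0,1}^{<ℕ}, the identity y_s = x_s y_{s0} y_{s10}⁻¹ y_{s11} holds in Homeo(C); i.e. for every ξ ∈ C, ξ·y_s = (((ξ·x_s)·y_{s0})·y_{s10}⁻¹)·y_{s11}. -/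
lemma cat_eval_lt (s : List Bool) (η : Cantor) (n : ℕ) (h : n < s.length) :
    cat s η n = s[n] := by simp [cat, h]

lemma cat_eval_ge (s : List Bool) (η : Cantor) (n : ℕ) (h : ¬ n < s.length) :
    cat s η n = η (n - s.length) := by simp [cat, h]

lemma not_prefix (s t u : List Bool) (η : Cantor) (i : ℕ) (hi : i < t.length)
    (hi' : i < u.length) (hne : t[i] ≠ u[i]) :
    ¬ IsPrefixOf (s ++ t) (cat (s ++ u) η) := by
  rintro ⟨ζ, h⟩
  have h2 := congrFun h (s.length + i)
  rw [cat_eval_lt _ _ _ (by simp; omega), cat_eval_lt _ _ _ (by simp; omega),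
    List.getElem_append_right (by omega), List.getElem_append_right (by omega)] at h2
  simp only [Nat.add_sub_cancel_left] at h2
  exact hne h2.symm

lemma prefix_mono (s t : List Bool) (ξ : Cantor) (h : IsPrefixOf (s ++ t) ξ) :
    IsPrefixOf s ξ := by
  obtain ⟨ζ, rfl⟩ := h
  exact ⟨cat t ζ, cat_append ..⟩

lemma yy_symm_fix (D : LMData) (a : List Bool) (ξ : Cantor) (h : ¬ IsPrefixOf a ξ) :
    (D.yy a).symm ξ = ξ := by
  conv_lhs => rw [← D.hyy' a ξ h]
  exact (D.yy a).symm_apply_apply ξ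

lemma yy_symm_cat (D : LMData) (a : List Bool) (η : Cantor) :
    (D.yy a).symm (cat a η) = cat a (D.y.symm η) := by
  have h2 : cat a η = D.yy a (cat a (D.y.symm η)) := by
    rw [D.hyy a, Homeomorph.apply_symm_apply]
  rw [h2]
  exact (D.yy a).symm_apply_apply _

lemma eta_decomp (η : Cantor) : η = cat [η 0, η 1] (fun n => η (n + 2)) := by
  funext n
  rcases n with _ | _ | n
  · simp [cat]
  · simp [cat]
  · rw [cat_eval_ge _ _ _ (by simp)]
    norm_num

lemma eta_decomp1 (η : Cantor) : η = cat [η 0] (fun n => η (n + 1)) := by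
  funext n
  rcases n with _ | n <;> simp [cat]

lemma key1 (D : LMData) (s : List Bool) (η : Cantor) :
    D.yy s (cat s (cat [true] η)) =
      D.yy (s ++ [true, true])
        ((D.yy (s ++ [true, false])).symm
          (D.yy (s ++ [false]) (D.xx s (cat s (cat [true] η))))) := by
  rw [D.hyy s, D.hy1, D.hxx s, D.hx1]
  simp only [← cat_append]
  rw [D.hyy' (s ++ [false]) _ (not_prefix s [false] [true, true] η 0 (by simp) (by simp) (by simp)),
    yy_symm_fix D (s ++ [true, false]) _
      (not_prefix s [true, false] [true, true] η 1 (by simp) (by simp) (by simp)),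
    D.hyy (s ++ [true, true]) η]

lemma key00 (D : LMData) (s : List Bool) (η : Cantor) :
    D.yy s (cat s (cat [false, false] η)) =
      D.yy (s ++ [true, true])
        ((D.yy (s ++ [true, false])).symm
          (D.yy (s ++ [false]) (D.xx s (cat s (cat [false, false] η))))) := by
  rw [D.hyy s, D.hy00, D.hxx s, D.hx00]
  simp only [← cat_append]
  rw [D.hyy (s ++ [false]) η,
    yy_symm_fix D (s ++ [true, false]) _
      (not_prefix s [true, false] [false] (D.y η) 0 (by simp) (by simp) (by simp)),
    D.hyy' (s ++ [true, true]) _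
      (not_prefix s [true, true] [false] (D.y η) 0 (by simp) (by simp) (by simp))]

lemma key01 (D : LMData) (s : List Bool) (η : Cantor) :
    D.yy s (cat s (cat [false, true] η)) =
      D.yy (s ++ [true, true])
        ((D.yy (s ++ [true, false])).symm
          (D.yy (s ++ [false]) (D.xx s (cat s (cat [false, true] η))))) := by
  rw [D.hyy s, D.hy01, D.hxx s, D.hx01]
  simp only [← cat_append]
  rw [D.hyy' (s ++ [false]) _
      (not_prefix s [false] [true, false] η 0 (by simp) (by simp) (by simp)),
    yy_symm_cat D (s ++ [true, false]) η,
    D.hyy' (s ++ [true, true]) _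
      (not_prefix s [true, true] [true, false] (D.y.symm η) 1 (by simp) (by simp) (by simp))]

/-- `y_s = x_s y_{s0} y_{s10}⁻¹ y_{s11}` pointwise:
`ξ·y_s = (((ξ·x_s)·y_{s0})·y_{s10}⁻¹)·y_{s11}`. -/
theorem statement12 (D : LMData) (s : List Bool) (ξ : Cantor) :
    D.yy s ξ =
      D.yy (s ++ [true, true])
        ((D.yy (s ++ [true, false])).symm (D.yy (s ++ [false]) (D.xx s ξ))) := by
  by_cases h : IsPrefixOf s ξ
  · obtain ⟨η, rfl⟩ := h
    cases h0 : η 0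
    · have hη : η = cat [false, η 1] (fun n => η (n + 2)) := by
        conv_lhs => rw [eta_decomp η]
        rw [h0]
      cases h1 : η 1
      · rw [h1] at hη; rw [hη]; exact key00 D s _
      · rw [h1] at hη; rw [hη]; exact key01 D s _
    · have hη : η = cat [true] (fun n => η (n + 1)) := by
        conv_lhs => rw [eta_decomp1 η]
        rw [h0]
      rw [hη]; exact key1 D s _
  · rw [D.hxx' s ξ h,
      D.hyy' (s ++ [false]) ξ (fun h' => h (prefix_mono _ _ _ h')),
      yy_symm_fix D (s ++ [true, false]) ξ (fun h' => h (prefix_mono _ _ _ h')),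
      D.hyy' (s ++ [true, true]) ξ (fun h' => h (prefix_mono _ _ _ h')),
      D.hyy' s ξ h]
end

section
/- The identity (y_{10} y_{110}⁻¹) · (x_∅⁻¹ y_{10} y_{110}⁻¹ x_∅) = y_{10} y_{1110}⁻¹ holds in Homeo(C) (products acting on the right); consequently the element y_{10} y_{1110}⁻¹ lies in the group S. -/
lemma catc (b : Bool) (s : List Bool) (η : Cantor) :
    cat (b :: s) η = cat [b] (cat s η) := by
  rw [← cat_append]; rfl

lemma catc2 (b c : Bool) (s : List Bool) (η : Cantor) :
    cat (b :: c :: s) η = cat [b] (cat (c :: s) η) := catc b (c :: s) η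

lemma cantor_expand (ξ : Cantor) : ξ = cat [ξ 0] (fun n => ξ (n+1)) := by
  funext n
  cases n with
  | zero => simp [cat]
  | succ m => simp [cat]

lemma not_prefix_of_ne (s : List Bool) (ξ : Cantor) (n : ℕ) (h : n < s.length)
    (hne : ξ n ≠ s.get ⟨n, h⟩) : ¬ IsPrefixOf s ξ := by
  rintro ⟨η, rfl⟩
  exact hne (by simp [cat, h])

namespace LMData
variable (D : LMData)

lemma yy_symm_cat (s : List Bool) (η : Cantor) :
    (D.yy s).symm (cat s η) = cat s (D.y.symm η) := by
  have h := D.hyy s (D.y.symm η)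
  rw [Homeomorph.apply_symm_apply] at h
  rw [← h, Homeomorph.symm_apply_apply]

lemma yy_symm_fix (s : List Bool) (ξ : Cantor) (h : ¬ IsPrefixOf s ξ) :
    (D.yy s).symm ξ = ξ := by
  nth_rewrite 1 [← D.hyy' s ξ h]
  exact Homeomorph.symm_apply_apply _ _

lemma x_symm0 (η : Cantor) : D.x.symm (cat [false] η) = cat [false] (cat [false] η) := by
  refine D.x.injective ?_
  rw [Homeomorph.apply_symm_apply, ← catc2, D.hx00]

lemma x_symm10 (η : Cantor) :
    D.x.symm (cat [true] (cat [false] η)) = cat [false] (cat [true] η) := by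
  refine D.x.injective ?_
  rw [← catc2, Homeomorph.apply_symm_apply, ← catc2, D.hx01]

lemma x_symm11 (η : Cantor) :
    D.x.symm (cat [true] (cat [true] η)) = cat [true] η := by
  refine D.x.injective ?_
  rw [Homeomorph.apply_symm_apply, D.hx1, catc2]

lemma x00 (η : Cantor) : D.x (cat [false] (cat [false] η)) = cat [false] η := by
  rw [← catc2]; exact D.hx00 η

lemma x01 (η : Cantor) :
    D.x (cat [false] (cat [true] η)) = cat [true] (cat [false] η) := by
  rw [← catc2, ← catc2]; exact D.hx01 η

lemma x1 (η : Cantor) : D.x (cat [true] η) = cat [true] (cat [true] η) := by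
  rw [← catc2]; exact D.hx1 η

lemma a_act (η : Cantor) :
    D.yy [true, false] (cat [true] (cat [false] η))
      = cat [true] (cat [false] (D.y η)) := by
  rw [← catc2, ← catc2]; exact D.hyy [true, false] η

lemma a_fix0 (μ : Cantor) : D.yy [true, false] (cat [false] μ) = cat [false] μ :=
  D.hyy' _ _ (not_prefix_of_ne _ _ 0 (by norm_num) (by simp [cat]))

lemma a_fix11 (μ : Cantor) :
    D.yy [true, false] (cat [true] (cat [true] μ)) = cat [true] (cat [true] μ) :=
  D.hyy' _ _ (not_prefix_of_ne _ _ 1 (by norm_num) (by simp [cat]))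

lemma b_symm_act (η : Cantor) :
    (D.yy [true, true, false]).symm (cat [true] (cat [true] (cat [false] η)))
      = cat [true] (cat [true] (cat [false] (D.y.symm η))) := by
  have h := D.yy_symm_cat [true, true, false] η
  simpa only [catc2] using h

lemma b_symm_fix0 (μ : Cantor) :
    (D.yy [true, true, false]).symm (cat [false] μ) = cat [false] μ :=
  D.yy_symm_fix _ _ (not_prefix_of_ne _ _ 0 (by norm_num) (by simp [cat]))

lemma b_symm_fix10 (μ : Cantor) :
    (D.yy [true, true, false]).symm (cat [true] (cat [false] μ))
      = cat [true] (cat [false] μ) :=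
  D.yy_symm_fix _ _ (not_prefix_of_ne _ _ 1 (by norm_num) (by simp [cat]))

lemma b_symm_fix111 (μ : Cantor) :
    (D.yy [true, true, false]).symm (cat [true] (cat [true] (cat [true] μ)))
      = cat [true] (cat [true] (cat [true] μ)) :=
  D.yy_symm_fix _ _ (not_prefix_of_ne _ _ 2 (by norm_num) (by simp [cat]))

lemma c_symm_act (η : Cantor) :
    (D.yy [true, true, true, false]).symm
        (cat [true] (cat [true] (cat [true] (cat [false] η))))
      = cat [true] (cat [true] (cat [true] (cat [false] (D.y.symm η)))) := by
  have h := D.yy_symm_cat [true, true, true, false] η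
  simpa only [catc2] using h

lemma c_symm_fix0 (μ : Cantor) :
    (D.yy [true, true, true, false]).symm (cat [false] μ) = cat [false] μ :=
  D.yy_symm_fix _ _ (not_prefix_of_ne _ _ 0 (by norm_num) (by simp [cat]))

lemma c_symm_fix10 (μ : Cantor) :
    (D.yy [true, true, true, false]).symm (cat [true] (cat [false] μ))
      = cat [true] (cat [false] μ) :=
  D.yy_symm_fix _ _ (not_prefix_of_ne _ _ 1 (by norm_num) (by simp [cat]))

lemma c_symm_fix110 (μ : Cantor) :
    (D.yy [true, true, true, false]).symm (cat [true] (cat [true] (cat [false] μ)))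
      = cat [true] (cat [true] (cat [false] μ)) :=
  D.yy_symm_fix _ _ (not_prefix_of_ne _ _ 2 (by norm_num) (by simp [cat]))

lemma c_symm_fix1111 (μ : Cantor) :
    (D.yy [true, true, true, false]).symm
        (cat [true] (cat [true] (cat [true] (cat [true] μ))))
      = cat [true] (cat [true] (cat [true] (cat [true] μ))) :=
  D.yy_symm_fix _ _ (not_prefix_of_ne _ _ 3 (by norm_num) (by simp [cat] <;> decide))

lemma key (ξ : Cantor) :
    D.x ((D.yy [true,true,false]).symm (D.yy [true,false] (D.x.symm
      ((D.yy [true,true,false]).symm (D.yy [true,false] ξ)))))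
    = (D.yy [true,true,true,false]).symm (D.yy [true,false] ξ) := by
  rw [cantor_expand ξ]
  cases h0 : ξ 0 with
  | false =>
      rw [a_fix0, b_symm_fix0, x_symm0, a_fix0, b_symm_fix0, x00, c_symm_fix0]
  | true =>
      rw [cantor_expand (fun n => ξ (n+1))]
      cases h1 : ξ 1 with
      | false =>
          rw [a_act, b_symm_fix10, x_symm10, a_fix0, b_symm_fix0, x01, c_symm_fix10]
      | true =>
          rw [cantor_expand (fun n => ξ (n+1+1))]
          cases h2 : ξ 2 with
          | false =>
              rw [a_fix11, b_symm_act, x_symm11, a_act,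
                Homeomorph.apply_symm_apply, b_symm_fix10, x1, c_symm_fix110]
          | true =>
              rw [cantor_expand (fun n => ξ (n+1+1+1))]
              cases h3 : ξ 3 with
              | false =>
                  rw [a_fix11, b_symm_fix111, x_symm11, a_fix11, b_symm_act, x1,
                    c_symm_act]
              | true =>
                  rw [a_fix11, b_symm_fix111, x_symm11, a_fix11, b_symm_fix111,
                    x1, c_symm_fix1111]

lemma x_eq_xx_nil : D.x = D.xx [] :=
  Homeomorph.ext fun ξ => by
    have h := D.hxx [] ξ
    rw [cat_nil, cat_nil] at h
    exact h.symm

end LMData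

/-- `(y₁₀ y₁₁₀⁻¹)(x_∅⁻¹ y₁₀ y₁₁₀⁻¹ x_∅) = y₁₀ y₁₁₁₀⁻¹` (right-action
words, written reversed in composition order), and consequently `y₁₀ y₁₁₁₀⁻¹ ∈ S`. -/
theorem statement16 (D : LMData) :
    (D.x * ((D.yy [true, true, false])⁻¹ * D.yy [true, false]) * D.x⁻¹) *
        ((D.yy [true, true, false])⁻¹ * D.yy [true, false]) =
      (D.yy [true, true, true, false])⁻¹ * D.yy [true, false] ∧
    (D.yy [true, true, true, false])⁻¹ * D.yy [true, false] ∈ Sgrp D := by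
  have heq : (D.x * ((D.yy [true, true, false])⁻¹ * D.yy [true, false]) * D.x⁻¹) *
        ((D.yy [true, true, false])⁻¹ * D.yy [true, false]) =
      (D.yy [true, true, true, false])⁻¹ * D.yy [true, false] :=
    Homeomorph.ext fun ξ => D.key ξ
  refine ⟨heq, ?_⟩
  have hx : D.x ∈ Sgrp D := by
    rw [D.x_eq_xx_nil]
    exact Subgroup.subset_closure
      (Or.inl (Subgroup.subset_closure (Or.inl ⟨[], rfl⟩)))
  have hs : (D.yy [true, true, false])⁻¹ * D.yy [true, false] ∈ Sgrp D :=
    Subgroup.subset_closure (Or.inr rfl)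
  rw [← heq]
  exact mul_mem (mul_mem (mul_mem hx hs) (inv_mem hx)) hs
end
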